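/- Let A be an N×N positive semi-definite Hermitian matrix and D an N×N diagonal matrix with non-negative diagonal entries d_1 ≥ ... ≥ d_N. Let Γ = Dᴴ A D with eigenvalues λ_k(Γ) in descending order. Then for each K with 1 ≤ K ≤ N-1, ∏_{k=1}^K λ_k(Γ) ≤ ∏_{k=1}^K d_k² λ_k(A), and ∏_{k=1}^N λ_k(Γ) = ∏_{k=1}^N d_k² λ_k(A). -/

import Mathlib

open Matrix BigOperators Finset

private theorem cb_aux {K N : ℕ} (X : Matrix (Fin K) (Fin N) ℂ) (Y : Matrix (Fin N) (Fin K) ℂ) :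
    (X * Y).det = ∑ p : Fin K → Fin N, (X.submatrix id p).det * ∏ i, Y (p i) i := by
  have h1 : (X * Y).det
      = ∑ p : Fin K → Fin N, ∑ σ : Equiv.Perm (Fin K),
          ((Equiv.Perm.sign σ : ℤ) : ℂ) * ∏ i, X (σ i) (p i) * Y (p i) i := by
    simp only [det_apply', mul_apply, prod_univ_sum, mul_sum, Fintype.piFinset_univ]
    rw [Finset.sum_comm]
  rw [h1]
  refine Finset.sum_congr rfl fun p _ => ?_
  rw [det_apply', Finset.sum_mul]
  refine Finset.sum_congr rfl fun σ _ => ?_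
  simp only [prod_mul_distrib, submatrix_apply, id_eq]
  ring

private theorem cb {K N : ℕ} (X : Matrix (Fin K) (Fin N) ℂ) (Y : Matrix (Fin N) (Fin K) ℂ) :
    (X * Y).det = ∑ f ∈ univ.filter (fun f : Fin K → Fin N => StrictMono f),
      (X.submatrix id f).det * (Y.submatrix f id).det := by
  classical
  rw [cb_aux, ← Finset.sum_filter_add_sum_filter_not univ
    (fun p : Fin K → Fin N => Function.Injective p)]
  have h2 : ∑ p ∈ univ.filter (fun p : Fin K → Fin N => ¬ Function.Injective p),
      (X.submatrix id p).det * ∏ i, Y (p i) i = 0 := by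
    refine Finset.sum_eq_zero fun p hp => ?_
    have hp' : ¬ Function.Injective p := (Finset.mem_filter.mp hp).2
    rw [Function.not_injective_iff] at hp'
    obtain ⟨i, j, hpij, hij⟩ := hp'
    have : (X.submatrix id p).det = 0 :=
      det_zero_of_column_eq hij (fun k => by simp [hpij])
    rw [this, zero_mul]
  rw [h2, add_zero]
  have h3 : ∑ p ∈ univ.filter (fun p : Fin K → Fin N => Function.Injective p),
      (X.submatrix id p).det * ∏ i, Y (p i) i
      = ∑ q ∈ (univ.filter (fun f : Fin K → Fin N => StrictMono f)) ×ˢ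
          (univ : Finset (Equiv.Perm (Fin K))),
        (X.submatrix id (q.1 ∘ q.2)).det * ∏ i, Y (q.1 (q.2 i)) i := by
    refine Finset.sum_nbij' (i := fun p => (p ∘ Tuple.sort p, (Tuple.sort p)⁻¹))
      (j := fun q => q.1 ∘ q.2) ?_ ?_ ?_ ?_ ?_
    · intro p hp
      have hp' : Function.Injective p := (Finset.mem_filter.mp hp).2
      refine Finset.mem_product.mpr ⟨Finset.mem_filter.mpr ⟨Finset.mem_univ _, ?_⟩,
        Finset.mem_univ _⟩
      exact (Tuple.monotone_sort p).strictMono_of_injective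
        (hp'.comp (Tuple.sort p).injective)
    · intro q hq
      have hq' : StrictMono q.1 := (Finset.mem_filter.mp (Finset.mem_product.mp hq).1).2
      exact Finset.mem_filter.mpr ⟨Finset.mem_univ _,
        hq'.injective.comp q.2.injective⟩
    · intro p _
      funext x
      simp
    · intro q hq
      have hq' : StrictMono q.1 := (Finset.mem_filter.mp (Finset.mem_product.mp hq).1).2
      have hsort : Tuple.sort (q.1 ∘ q.2) = q.2⁻¹ := by
        symm
        rw [Tuple.eq_sort_iff]
        constructor
        · have : (q.1 ∘ q.2) ∘ ⇑q.2⁻¹ = q.1 := by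
            funext x; simp
          rw [this]
          exact hq'.monotone
        · intro i j hij heq
          exfalso
          have : (q.2 : Equiv.Perm (Fin K)) (q.2⁻¹ i) = q.2 (q.2⁻¹ j) :=
            hq'.injective heq
          simp at this
          exact hij.ne this
      refine Prod.ext ?_ ?_
      · show (q.1 ∘ q.2) ∘ Tuple.sort (q.1 ∘ q.2) = q.1
        rw [hsort]; funext x; simp
      · show (Tuple.sort (q.1 ∘ ⇑q.2))⁻¹ = q.2
        rw [hsort, inv_inv]
    · intro p _
      have : (p ∘ (Tuple.sort p)) ∘ ⇑(Tuple.sort p)⁻¹ = p := by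
        funext x; simp
      rw [this]
      congr 1
      refine Finset.prod_congr rfl fun i _ => ?_
      simp
  rw [h3, Finset.sum_product]
  refine Finset.sum_congr rfl fun f _ => ?_
  have key : ∀ σ : Equiv.Perm (Fin K),
      (X.submatrix id (f ∘ σ)).det = ((Equiv.Perm.sign σ : ℤ) : ℂ) * (X.submatrix id f).det := by
    intro σ
    have : X.submatrix id (f ∘ σ) = (X.submatrix id f).submatrix id σ := rfl
    rw [this, det_permute']
  calc ∑ σ : Equiv.Perm (Fin K), (X.submatrix id (f ∘ σ)).det * ∏ i, Y (f (σ i)) i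
      = (X.submatrix id f).det *
        ∑ σ : Equiv.Perm (Fin K), ((Equiv.Perm.sign σ : ℤ) : ℂ) * ∏ i, Y (f (σ i)) i := by
        rw [Finset.mul_sum]
        refine Finset.sum_congr rfl fun σ _ => ?_
        rw [key σ]; ring
    _ = (X.submatrix id f).det * (Y.submatrix f id).det := by
        congr 1
        rw [det_apply']
        refine Finset.sum_congr rfl fun σ _ => ?_
        simp


private theorem gram_det {K N : ℕ} (g : Fin N → ℝ) (C : Matrix (Fin N) (Fin K) ℂ) :
    (Cᴴ * Matrix.diagonal (fun i => (g i : ℂ)) * C).det =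
    ((∑ f ∈ univ.filter (fun f : Fin K → Fin N => StrictMono f),
       (∏ j, g (f j)) * Complex.normSq ((C.submatrix f id).det) : ℝ) : ℂ) := by
  rw [cb]
  rw [Complex.ofReal_sum]
  refine Finset.sum_congr rfl fun f _ => ?_
  have hX : (Cᴴ * Matrix.diagonal (fun i => (g i : ℂ))).submatrix id f
      = (C.submatrix f id)ᴴ * Matrix.diagonal (fun j => (g (f j) : ℂ)) := by
    ext i j
    simp [Matrix.mul_diagonal]
  rw [hX, det_mul, det_conjTranspose, det_diagonal]
  have : (∏ j : Fin K, (g (f j) : ℂ)) = ((∏ j : Fin K, g (f j) : ℝ) : ℂ) := by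
    push_cast; rfl
  rw [this]
  set z := (C.submatrix f id).det
  have hz : (starRingEnd ℂ) z = star z := rfl
  rw [Complex.ofReal_mul, Complex.normSq_eq_conj_mul_self, hz]
  ring

private theorem strictMono_le {K N : ℕ} {f : Fin K → Fin N} (hf : StrictMono f) (j : Fin K) :
    (j : ℕ) ≤ (f j : ℕ) := by
  induction' hj : (j : ℕ) with m ih generalizing j
  · omega
  · have hm : m < K := by omega
    have hlt : (⟨m, hm⟩ : Fin K) < j := by simp [Fin.lt_def, hj]
    have h1 := hf hlt
    have h2 := ih ⟨m, hm⟩ rfl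
    rw [Fin.lt_def] at h1
    simp at h1 h2
    omega

private theorem prod_le_top {K N : ℕ} (hKN : K ≤ N) (lam : Fin N → ℝ)
    (h0 : ∀ i, 0 ≤ lam i) (hmono : Antitone lam) {h : Fin K → Fin N}
    (hinj : Function.Injective h) :
    ∏ j : Fin K, lam (h j) ≤ ∏ j : Fin K, lam (Fin.castLE hKN j) := by
  have hperm : ∏ j : Fin K, lam (h (Tuple.sort h j)) = ∏ j : Fin K, lam (h j) :=
    Equiv.prod_comp (Tuple.sort h) (fun j => lam (h j))
  rw [← hperm]
  have hsm : StrictMono (h ∘ Tuple.sort h) :=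
    (Tuple.monotone_sort h).strictMono_of_injective (hinj.comp (Tuple.sort h).injective)
  refine Finset.prod_le_prod (fun j _ => h0 _) (fun j _ => ?_)
  refine hmono ?_
  show Fin.castLE hKN j ≤ h (Tuple.sort h j)
  rw [Fin.le_def]
  simpa using strictMono_le hsm j

private theorem mulsubL {a b n m : Type*} [Fintype n] (M : Matrix a n ℂ) (Q : Matrix n m ℂ)
    (r : b → a) : (M.submatrix r id) * Q = (M * Q).submatrix r id := by
  ext i j; simp [Matrix.mul_apply]

private theorem mulsubLR {b n : Type*} [Fintype n] (M Q : Matrix n n ℂ) (e : b → n) :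
    (M.submatrix e id) * (Q.submatrix id e) = (M * Q).submatrix e e := by
  ext i j; simp [Matrix.mul_apply]

private theorem subdiag {b n : Type*} [DecidableEq n] [DecidableEq b] (μ : n → ℂ) {e : b → n}
    (he : Function.Injective e) :
    (Matrix.diagonal μ).submatrix e e = Matrix.diagonal (fun j => μ (e j)) := by
  ext i j
  by_cases h : i = j
  · simp [h]
  · rw [Matrix.submatrix_apply, Matrix.diagonal_apply_ne _ (fun hc => h (he hc)),
      Matrix.diagonal_apply_ne _ h]

private theorem subone {b n : Type*} [DecidableEq n] [DecidableEq b] {e : b → n}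
    (he : Function.Injective e) :
    (1 : Matrix n n ℂ).submatrix e e = 1 := by
  rw [← Matrix.diagonal_one, subdiag _ he]; rfl

private theorem compress {N K : ℕ} (P : Matrix (Fin N) (Fin N) ℂ) (hP : Pᴴ * P = 1)
    (μ : Fin N → ℂ) {e : Fin K → Fin N} (he : Function.Injective e) :
    (P.submatrix id e)ᴴ * (P * Matrix.diagonal μ * Pᴴ) * (P.submatrix id e)
      = Matrix.diagonal (fun j => μ (e j)) := by
  rw [conjTranspose_submatrix, mulsubL, mulsubLR]
  have h1 : Pᴴ * (P * Matrix.diagonal μ * Pᴴ) * P = (Pᴴ * P) * Matrix.diagonal μ * (Pᴴ * P) := by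
    simp only [mul_assoc]
  rw [h1, hP, one_mul, mul_one, subdiag _ he]

private theorem subUU {N K : ℕ} (P : Matrix (Fin N) (Fin N) ℂ) (hP : Pᴴ * P = 1)
    {e : Fin K → Fin N} (he : Function.Injective e) :
    (P.submatrix id e)ᴴ * (P.submatrix id e) = 1 := by
  rw [conjTranspose_submatrix, mulsubLR, hP, subone he]

private theorem filter_prod {N K : ℕ} (hKN : K ≤ N) (F : Fin N → ℝ) :
    ∏ i ∈ univ.filter (fun i : Fin N => (i : ℕ) < K), F i
      = ∏ j : Fin K, F (Fin.castLE hKN j) := by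
  classical
  set G : ℕ → ℝ := fun m => if h : m < N then F ⟨m, h⟩ else 1 with hG
  have h1 : ∏ i ∈ univ.filter (fun i : Fin N => (i : ℕ) < K), F i
      = ∏ i : Fin N, (if (i : ℕ) < K then G (i : ℕ) else 1) := by
    rw [Finset.prod_filter]
    refine Finset.prod_congr rfl fun i _ => ?_
    by_cases h : (i : ℕ) < K
    · simp [h, hG, i.isLt]
    · simp [h]
  have h2 : ∏ i : Fin N, (if (i : ℕ) < K then G (i : ℕ) else 1)
      = ∏ m ∈ Finset.range N, (if m < K then G m else 1) :=
    Fin.prod_univ_eq_prod_range (fun m => if m < K then G m else 1) N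
  have h3 : ∏ m ∈ Finset.range N, (if m < K then G m else 1)
      = ∏ m ∈ Finset.range K, G m := by
    rw [← Finset.prod_filter]
    congr 1
    ext m
    simp only [Finset.mem_filter, Finset.mem_range]
    omega
  have h4 : ∏ j : Fin K, F (Fin.castLE hKN j) = ∏ m ∈ Finset.range K, G m := by
    rw [← Fin.prod_univ_eq_prod_range]
    refine Finset.prod_congr rfl fun j _ => ?_
    have : (j : ℕ) < N := lt_of_lt_of_le j.isLt hKN
    simp [hG, this, Fin.castLE]
  rw [h1, h2, h3, h4]

open ComplexOrder

theorem stmt_6 {N : ℕ} (A D : Matrix (Fin N) (Fin N) ℂ)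
    (hA : A.PosSemidef)
    (d : Fin N → ℝ) (hd0 : ∀ i, 0 ≤ d i) (hd_desc : Antitone d)
    (hD : D = Matrix.diagonal (fun i => (d i : ℂ)))
    (hΓ : (Dᴴ * A * D).PosSemidef)
    (lamA lamΓ : Fin N → ℝ) (sA sΓ : Equiv.Perm (Fin N))
    (hlamA : ∀ i, lamA i = hA.1.eigenvalues (sA i))
    (hlamΓ : ∀ i, lamΓ i = hΓ.1.eigenvalues (sΓ i))
    (hA_desc : Antitone lamA) (hΓ_desc : Antitone lamΓ) :
    (∀ K, 1 ≤ K → K ≤ N - 1 →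
      ∏ i ∈ Finset.univ.filter (fun i : Fin N => (i : ℕ) < K), lamΓ i ≤
        ∏ i ∈ Finset.univ.filter (fun i : Fin N => (i : ℕ) < K), d i ^ 2 * lamA i) ∧
      ∏ i : Fin N, lamΓ i = ∏ i : Fin N, d i ^ 2 * lamA i := by
  classical
  have lamA0 : ∀ i, 0 ≤ lamA i := fun i => (hlamA i) ▸ hA.eigenvalues_nonneg _
  constructor
  · intro K hK1 hK2
    have hKN : K ≤ N := hK2.trans (Nat.sub_le N 1)
    set κ : Fin K → Fin N := Fin.castLE hKN with hκ
    set e : Fin K → Fin N := fun j => sΓ (κ j) with he_def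
    have he : Function.Injective e := fun a b h => Fin.castLE_injective hKN (sΓ.injective h)
    set P : Matrix (Fin N) (Fin N) ℂ := (hΓ.1.eigenvectorUnitary : Matrix (Fin N) (Fin N) ℂ)
      with hPdef
    set V : Matrix (Fin N) (Fin N) ℂ := (hA.1.eigenvectorUnitary : Matrix (Fin N) (Fin N) ℂ)
      with hVdef
    have hP : Pᴴ * P = 1 := by
      rw [hPdef, ← Matrix.star_eq_conjTranspose]
      exact Matrix.UnitaryGroup.star_mul_self _
    have hVV : V * Vᴴ = 1 := by
      apply mul_eq_one_comm.mp
      rw [hVdef, ← Matrix.star_eq_conjTranspose]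
      exact Matrix.UnitaryGroup.star_mul_self _
    set U : Matrix (Fin N) (Fin K) ℂ := P.submatrix id e with hUdef
    set C : Matrix (Fin N) (Fin K) ℂ := Vᴴ * D * U with hCdef
    have hU1 : Uᴴ * (Dᴴ * A * D) * U = Matrix.diagonal (fun j => (lamΓ (κ j) : ℂ)) := by
      have hspec := hΓ.1.spectral_theorem
      rw [Unitary.conjStarAlgAut_apply, Matrix.star_eq_conjTranspose] at hspec
      calc Uᴴ * (Dᴴ * A * D) * U
          = (P.submatrix id e)ᴴ *
              (P * Matrix.diagonal (RCLike.ofReal ∘ hΓ.1.eigenvalues) * Pᴴ) *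
              (P.submatrix id e) := by rw [← hspec, hUdef]
        _ = Matrix.diagonal (fun j => (RCLike.ofReal ∘ hΓ.1.eigenvalues) (e j)) :=
            compress P hP _ he
        _ = Matrix.diagonal (fun j => (lamΓ (κ j) : ℂ)) :=
            congrArg Matrix.diagonal (funext fun j => by rw [hlamΓ (κ j)]; rfl)
    have hU2 : Uᴴ * (Dᴴ * A * D) * U
        = Cᴴ * Matrix.diagonal (fun i => (hA.1.eigenvalues i : ℂ)) * C := by
      have hspec := hA.1.spectral_theorem
      rw [Unitary.conjStarAlgAut_apply, Matrix.star_eq_conjTranspose] at hspec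
      have hdiag : Matrix.diagonal (RCLike.ofReal ∘ hA.1.eigenvalues)
          = Matrix.diagonal (fun i => (hA.1.eigenvalues i : ℂ)) := rfl
      rw [hCdef]
      conv_lhs => rw [hspec]
      simp only [conjTranspose_mul, conjTranspose_conjTranspose, hdiag, Matrix.mul_assoc]
      rfl
    have hDD : Dᴴ * D = Matrix.diagonal (fun i => ((d i ^ 2 : ℝ) : ℂ)) := by
      rw [hD, diagonal_conjTranspose, diagonal_mul_diagonal]
      congr 1; funext i
      simp only [Pi.star_apply, Complex.star_def, Complex.conj_ofReal]
      push_cast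
      ring
    have hU3 : Cᴴ * C = Uᴴ * Matrix.diagonal (fun i => ((d i ^ 2 : ℝ) : ℂ)) * U := by
      rw [hCdef]
      have h1 : (Vᴴ * D * U)ᴴ * (Vᴴ * D * U) = Uᴴ * (Dᴴ * (V * (Vᴴ * (D * U)))) := by
        simp only [conjTranspose_mul, conjTranspose_conjTranspose, Matrix.mul_assoc]
      rw [h1, ← Matrix.mul_assoc V Vᴴ (D * U), hVV, Matrix.one_mul,
        ← Matrix.mul_assoc Dᴴ D U, hDD, ← Matrix.mul_assoc]
    have hUU : Uᴴ * U = 1 := by rw [hUdef]; exact subUU P hP he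
    set SM := univ.filter (fun f : Fin K → Fin N => StrictMono f) with hSM
    set w : (Fin K → Fin N) → ℝ := fun f => Complex.normSq ((C.submatrix f id).det) with hw
    set v : (Fin K → Fin N) → ℝ := fun f => Complex.normSq ((U.submatrix f id).det) with hv
    have w0 : ∀ f, 0 ≤ w f := fun f => Complex.normSq_nonneg _
    have v0 : ∀ f, 0 ≤ v f := fun f => Complex.normSq_nonneg _
    have E1 : (∏ j : Fin K, lamΓ (κ j))
        = ∑ f ∈ SM, (∏ j, hA.1.eigenvalues (f j)) * w f := by
      apply Complex.ofReal_inj.mp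
      calc ((∏ j : Fin K, lamΓ (κ j) : ℝ) : ℂ)
          = (Uᴴ * (Dᴴ * A * D) * U).det := by
            rw [hU1, det_diagonal, Complex.ofReal_prod]
        _ = _ := by rw [hU2, gram_det, Complex.ofReal_sum]
    have E2 : ∑ f ∈ SM, w f = ∑ f ∈ SM, (∏ j, d (f j) ^ 2) * v f := by
      apply Complex.ofReal_inj.mp
      calc ((∑ f ∈ SM, w f : ℝ) : ℂ)
          = (Cᴴ * Matrix.diagonal (fun _ : Fin N => ((1 : ℝ) : ℂ)) * C).det := by
            rw [gram_det (fun _ => (1 : ℝ)) C]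
            norm_num
            rfl
        _ = (Cᴴ * C).det := by
            rw [show Matrix.diagonal (fun _ : Fin N => ((1 : ℝ) : ℂ)) = 1 by simp,
              Matrix.mul_one]
        _ = (Uᴴ * Matrix.diagonal (fun i => ((d i ^ 2 : ℝ) : ℂ)) * U).det := by rw [hU3]
        _ = _ := by rw [gram_det (fun i => d i ^ 2) U]
    have E3 : ∑ f ∈ SM, v f = 1 := by
      apply Complex.ofReal_inj.mp
      calc ((∑ f ∈ SM, v f : ℝ) : ℂ)
          = (Uᴴ * Matrix.diagonal (fun _ : Fin N => ((1 : ℝ) : ℂ)) * U).det := by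
            rw [gram_det (fun _ => (1 : ℝ)) U]
            norm_num
            rfl
        _ = 1 := by
            rw [show Matrix.diagonal (fun _ : Fin N => ((1 : ℝ) : ℂ)) = 1 by simp,
              Matrix.mul_one, hUU, det_one]
    have bound1 : ∑ f ∈ SM, (∏ j, hA.1.eigenvalues (f j)) * w f
        ≤ (∏ j : Fin K, lamA (κ j)) * ∑ f ∈ SM, w f := by
      rw [Finset.mul_sum]
      refine Finset.sum_le_sum fun f hf => ?_
      have hfm : StrictMono f := by
        rw [hSM] at hf
        exact (Finset.mem_filter.mp hf).2
      refine mul_le_mul_of_nonneg_right ?_ (w0 f)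
      have hinj : Function.Injective (fun j => sA.symm (f j)) :=
        fun a b hab => hfm.injective (sA.symm.injective hab)
      have heq : (∏ j, hA.1.eigenvalues (f j)) = ∏ j : Fin K, lamA (sA.symm (f j)) := by
        refine Finset.prod_congr rfl fun j _ => ?_
        rw [hlamA, Equiv.apply_symm_apply]
      rw [heq]
      exact prod_le_top hKN lamA lamA0 hA_desc hinj
    have hd2mono : Antitone (fun i => d i ^ 2) := fun a b hab =>
      pow_le_pow_left₀ (hd0 b) (hd_desc hab) 2
    have bound2 : ∑ f ∈ SM, (∏ j, d (f j) ^ 2) * v f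
        ≤ (∏ j : Fin K, d (κ j) ^ 2) * ∑ f ∈ SM, v f := by
      rw [Finset.mul_sum]
      refine Finset.sum_le_sum fun f hf => ?_
      have hfm : StrictMono f := by
        rw [hSM] at hf
        exact (Finset.mem_filter.mp hf).2
      refine mul_le_mul_of_nonneg_right ?_ (v0 f)
      exact prod_le_top hKN (fun i => d i ^ 2) (fun i => sq_nonneg _) hd2mono hfm.injective
    calc ∏ i ∈ Finset.univ.filter (fun i : Fin N => (i : ℕ) < K), lamΓ i
        = ∏ j : Fin K, lamΓ (κ j) := filter_prod hKN lamΓ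
      _ = ∑ f ∈ SM, (∏ j, hA.1.eigenvalues (f j)) * w f := E1
      _ ≤ (∏ j : Fin K, lamA (κ j)) * ∑ f ∈ SM, w f := bound1
      _ = (∏ j : Fin K, lamA (κ j)) * ∑ f ∈ SM, (∏ j, d (f j) ^ 2) * v f := by rw [E2]
      _ ≤ (∏ j : Fin K, lamA (κ j)) * ((∏ j : Fin K, d (κ j) ^ 2) * ∑ f ∈ SM, v f) :=
          mul_le_mul_of_nonneg_left bound2 (Finset.prod_nonneg fun j _ => lamA0 _)
      _ = ∏ j : Fin K, (d (κ j) ^ 2 * lamA (κ j)) := by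
          rw [E3, mul_one, mul_comm, ← Finset.prod_mul_distrib]
      _ = ∏ i ∈ Finset.univ.filter (fun i : Fin N => (i : ℕ) < K), d i ^ 2 * lamA i :=
          (filter_prod hKN (fun i => d i ^ 2 * lamA i)).symm
  · have detD : D.det = ((∏ i, d i : ℝ) : ℂ) := by
      rw [hD, det_diagonal, Complex.ofReal_prod]
    have detDh : Dᴴ.det = ((∏ i, d i : ℝ) : ℂ) := by
      rw [det_conjTranspose, detD]
      simp [Complex.star_def, Complex.conj_ofReal]
    have hpΓ : ∏ i, lamΓ i = ∏ i, hΓ.1.eigenvalues i := by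
      rw [Finset.prod_congr rfl fun i _ => hlamΓ i]
      exact Equiv.prod_comp sΓ _
    have hpA : ∏ i, lamA i = ∏ i, hA.1.eigenvalues i := by
      rw [Finset.prod_congr rfl fun i _ => hlamA i]
      exact Equiv.prod_comp sA _
    have h1 : (Dᴴ * A * D).det = ((∏ i, lamΓ i : ℝ) : ℂ) := by
      rw [hΓ.1.det_eq_prod_eigenvalues, hpΓ, Complex.ofReal_prod]
      rfl
    have h2 : (Dᴴ * A * D).det = ((((∏ i, d i) ^ 2) * ∏ i, lamA i : ℝ) : ℂ) := by
      rw [det_mul, det_mul, detD, detDh, hA.1.det_eq_prod_eigenvalues, hpA]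
      push_cast
      ring_nf
      rfl
    have h3 : ∏ i, lamΓ i = ((∏ i, d i) ^ 2) * ∏ i, lamA i :=
      Complex.ofReal_inj.mp (h1.symm.trans h2)
    rw [h3, Finset.prod_mul_distrib, Finset.prod_pow]
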